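/- Let A be SPD, M̃ SPD with M̃ − A positive semidefinite, and let 0 < λ₁ ≤ ... ≤ λ_n ≤ 1 be the eigenvalues of the generalized eigenproblem A v = λ M̃ v with M̃-orthonormal eigenvectors v₁,...,v_n. For n_c < n, let P_opt = [v₁ ... v_{n_c}]. Then K_TG := max_{v≠0} ‖(I − π_{M̃})v‖_{M̃}² / ‖v‖_A² with π_{M̃} the M̃-orthogonal projection onto range(P_opt) equals 1/λ_{n_c+1}, and this is the minimum of K over all full-rank P with n_c columns. -/

import Mathlib

open Matrix

/-- The `A`-norm of a vector, `‖v‖_A = √(vᵀ A v)`. -/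
noncomputable def anorm {n : ℕ} (A : Matrix (Fin n) (Fin n) ℝ) (v : Fin n → ℝ) : ℝ :=
  Real.sqrt (v ⬝ᵥ A.mulVec v)

/-- The operator norm of a matrix `E` induced by the `A`-norm. -/
noncomputable def opNormA {n : ℕ} (A E : Matrix (Fin n) (Fin n) ℝ) : ℝ :=
  ⨆ v : {v : Fin n → ℝ // v ≠ 0}, anorm A (E.mulVec v) / anorm A v

/-- The sharp two-grid constant `K_TG(P) = max_v ‖(I - π_M̃)v‖_M̃² / ‖v‖_A²`. -/
noncomputable def Kconst {n nc : ℕ} (A Mt : Matrix (Fin n) (Fin n) ℝ)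
    (P : Matrix (Fin n) (Fin nc) ℝ) : ℝ :=
  ⨆ v : {v : Fin n → ℝ // v ≠ 0},
    (((1 - P * (Pᵀ * Mt * P)⁻¹ * Pᵀ * Mt).mulVec v) ⬝ᵥ
        Mt.mulVec ((1 - P * (Pᵀ * Mt * P)⁻¹ * Pᵀ * Mt).mulVec v)) /
      (v ⬝ᵥ A.mulVec v)

section AuxLemmas

variable {n m : ℕ}

lemma quad_form2 (B : Matrix (Fin n) (Fin m) ℝ) (M : Matrix (Fin n) (Fin n) ℝ)
    (c : Fin m → ℝ) (z : Fin n → ℝ) :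
    (B.mulVec c) ⬝ᵥ M.mulVec z = c ⬝ᵥ (Bᵀ * M).mulVec z := by
  simp [Matrix.dotProduct_mulVec, ← Matrix.vecMul_vecMul, Matrix.vecMul_transpose,
    ← Matrix.mulVec_mulVec]

lemma quad_form (B : Matrix (Fin n) (Fin m) ℝ) (M : Matrix (Fin n) (Fin n) ℝ)
    (c : Fin m → ℝ) :
    (B.mulVec c) ⬝ᵥ M.mulVec (B.mulVec c) = c ⬝ᵥ (Bᵀ * M * B).mulVec c := by
  rw [quad_form2, Matrix.mulVec_mulVec]

lemma gramM (Mt : Matrix (Fin n) (Fin n) ℝ) (v : Fin n → Fin n → ℝ)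
    (horth : ∀ i j, (v i) ⬝ᵥ Mt.mulVec (v j) = if i = j then 1 else 0)
    {m k : ℕ} (e : Fin m → Fin n) (f : Fin k → Fin n) :
    (Matrix.of fun i j => v (e j) i)ᵀ * Mt * (Matrix.of fun i j => v (f j) i)
      = Matrix.of fun j l => if e j = f l then (1:ℝ) else 0 := by
  ext j l
  have := horth (e j) (f l)
  rw [Matrix.mul_assoc]
  simpa [Matrix.mul_apply, dotProduct, Matrix.mulVec] using this

lemma gramA (A Mt : Matrix (Fin n) (Fin n) ℝ) (lam : Fin n → ℝ)
    (v : Fin n → Fin n → ℝ)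
    (heig : ∀ i, A.mulVec (v i) = lam i • Mt.mulVec (v i))
    (horth : ∀ i j, (v i) ⬝ᵥ Mt.mulVec (v j) = if i = j then 1 else 0)
    {m k : ℕ} (e : Fin m → Fin n) (f : Fin k → Fin n) :
    (Matrix.of fun i j => v (e j) i)ᵀ * A * (Matrix.of fun i j => v (f j) i)
      = Matrix.of fun j l => if e j = f l then lam (f l) else 0 := by
  ext j l
  have h : (v (e j)) ⬝ᵥ A.mulVec (v (f l)) = if e j = f l then lam (f l) else 0 := by
    rw [heig, dotProduct_smul, horth]
    by_cases h : e j = f l <;> simp [h]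
  rw [Matrix.mul_assoc]
  simpa [Matrix.mul_apply, dotProduct, Matrix.mulVec] using h

/-- If `w` is `Mt`-orthogonal to the range of `Q`, the coarse-grid correction fixes it. -/
lemma proj_fix (Mt : Matrix (Fin n) (Fin n) ℝ) (Q : Matrix (Fin n) (Fin m) ℝ)
    (w : Fin n → ℝ) (h : (Qᵀ * Mt).mulVec w = 0) :
    (1 - Q * (Qᵀ * Mt * Q)⁻¹ * Qᵀ * Mt).mulVec w = w := by
  have h2 : Q * (Qᵀ * Mt * Q)⁻¹ * Qᵀ * Mt = (Q * (Qᵀ * Mt * Q)⁻¹) * (Qᵀ * Mt) := by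
    rw [Matrix.mul_assoc]
  rw [Matrix.sub_mulVec, Matrix.one_mulVec, h2, ← Matrix.mulVec_mulVec, h,
    Matrix.mulVec_zero, sub_zero]

lemma dot_symm (M : Matrix (Fin n) (Fin n) ℝ) (hM : Mᵀ = M) (x y : Fin n → ℝ) :
    x ⬝ᵥ M.mulVec y = y ⬝ᵥ M.mulVec x := by
  rw [Matrix.dotProduct_mulVec, ← hM, Matrix.vecMul_transpose, dotProduct_comm, hM]

end AuxLemmas

set_option maxHeartbeats 1000000 in
theorem optimal_interpolation {n nc : ℕ} (hnc : nc < n)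
    (A Mt : Matrix (Fin n) (Fin n) ℝ) (hA : A.PosDef) (hMt : Mt.PosDef)
    (hMtA : (Mt - A).PosSemidef)
    (lam : Fin n → ℝ) (v : Fin n → (Fin n → ℝ))
    (hmono : Monotone lam) (hpos : ∀ i, 0 < lam i) (hle1 : ∀ i, lam i ≤ 1)
    (heig : ∀ i, A.mulVec (v i) = lam i • Mt.mulVec (v i))
    (horth : ∀ i j, (v i) ⬝ᵥ Mt.mulVec (v j) = if i = j then 1 else 0) :
    Kconst A Mt (Matrix.of fun i (j : Fin nc) => v (Fin.castLE hnc.le j) i)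
        = 1 / lam ⟨nc, hnc⟩ ∧
      ∀ P : Matrix (Fin n) (Fin nc) ℝ, Function.Injective P.mulVec →
        Kconst A Mt (Matrix.of fun i (j : Fin nc) => v (Fin.castLE hnc.le j) i)
          ≤ Kconst A Mt P := by
  have hMtT : Mtᵀ = Mt := hMt.1
  -- the eigenvector matrix
  set V : Matrix (Fin n) (Fin n) ℝ := Matrix.of (fun i j => v j i) with hV
  have hVMV : Vᵀ * Mt * V = 1 := by
    have h := gramM Mt v horth (id : Fin n → Fin n) (id : Fin n → Fin n)
    simp only [id_eq] at h
    rw [hV, h]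
    ext j l
    simp [Matrix.one_apply]
  have hVAV : Vᵀ * A * V = Matrix.diagonal lam := by
    have h := gramA A Mt lam v heig horth (id : Fin n → Fin n) (id : Fin n → Fin n)
    simp only [id_eq] at h
    rw [hV, h]
    ext j l
    by_cases hjl : j = l <;> simp [hjl, Matrix.diagonal_apply]
  have hVinv : V * (Vᵀ * Mt) = 1 := by
    rw [mul_eq_one_comm]
    exact hVMV
  have hrepr : ∀ w : Fin n → ℝ, V.mulVec ((Vᵀ * Mt).mulVec w) = w := by
    intro w
    rw [Matrix.mulVec_mulVec, hVinv, Matrix.one_mulVec]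
  have hqM : ∀ c : Fin n → ℝ,
      (V.mulVec c) ⬝ᵥ Mt.mulVec (V.mulVec c) = ∑ i, c i * c i := by
    intro c
    rw [quad_form, hVMV, Matrix.one_mulVec]
    simp [dotProduct]
  have hqA : ∀ c : Fin n → ℝ,
      (V.mulVec c) ⬝ᵥ A.mulVec (V.mulVec c) = ∑ i, lam i * (c i * c i) := by
    intro c
    rw [quad_form, hVAV]
    simp only [dotProduct, Matrix.mulVec_diagonal]
    exact Finset.sum_congr rfl fun i _ => by ring

  have hn0 : 0 < n := lt_of_le_of_lt (Nat.zero_le nc) hnc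
  set P₀ : Matrix (Fin n) (Fin nc) ℝ :=
    Matrix.of fun i (j : Fin nc) => v (Fin.castLE hnc.le j) i with hP₀
  have hS : P₀ᵀ * Mt * P₀ = 1 := by
    rw [hP₀, gramM Mt v horth (Fin.castLE hnc.le) (Fin.castLE hnc.le)]
    ext j l
    simp [Matrix.one_apply, Fin.castLE_inj]
  have hPMV : P₀ᵀ * Mt * V
      = Matrix.of fun j l => if Fin.castLE hnc.le j = l then (1:ℝ) else 0 := by
    rw [hP₀, hV]
    have h := gramM Mt v horth (Fin.castLE hnc.le) (id : Fin n → Fin n)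
    simpa only [id_eq] using h
  have hPprod : P₀ * (Matrix.of fun j l => if Fin.castLE hnc.le j = l then (1:ℝ) else 0)
      = V * Matrix.diagonal (fun i : Fin n => if (i : ℕ) < nc then (1:ℝ) else 0) := by
    rw [hP₀, hV]
    ext i l
    rw [Matrix.mul_diagonal]
    simp only [Matrix.mul_apply, Matrix.of_apply, mul_ite, mul_one, mul_zero]
    by_cases h : (l : ℕ) < nc
    · rw [Finset.sum_eq_single (⟨(l : ℕ), h⟩ : Fin nc)]
      · have hel : Fin.castLE hnc.le (⟨(l : ℕ), h⟩ : Fin nc) = l := by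
          apply Fin.ext; rfl
        rw [if_pos hel, hel, if_pos h]
      · intro j _ hj
        rw [if_neg]
        intro hcontra
        apply hj
        apply Fin.ext
        have := congrArg Fin.val hcontra
        simpa using this
      · intro hmem; exact absurd (Finset.mem_univ _) hmem
    · rw [if_neg h]
      apply Finset.sum_eq_zero
      intro j _
      rw [if_neg]
      intro hcontra
      apply h
      have := congrArg Fin.val hcontra
      simp at this
      omega
  have hmask : ∀ c : Fin n → ℝ,
      (1 - P₀ * P₀ᵀ * Mt).mulVec (V.mulVec c)
        = V.mulVec (fun i => if (i : ℕ) < nc then 0 else c i) := by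
    intro c
    rw [Matrix.sub_mulVec, Matrix.one_mulVec, Matrix.mulVec_mulVec]
    have hassoc : P₀ * P₀ᵀ * Mt * V = P₀ * (P₀ᵀ * Mt * V) := by
      simp only [Matrix.mul_assoc]
    rw [hassoc, hPMV, hPprod, ← Matrix.mulVec_mulVec, ← Matrix.mulVec_sub]
    have hfun : (c - (Matrix.diagonal fun i : Fin n => if (i:ℕ) < nc then (1:ℝ) else 0).mulVec c)
        = fun (i : Fin n) => if (i : ℕ) < nc then 0 else c i := by
      funext i
      by_cases h : (i : ℕ) < nc <;> simp [Matrix.mulVec_diagonal, h]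
    rw [hfun]
  have hub : ∀ w : Fin n → ℝ, w ≠ 0 →
      (((1 - P₀ * (P₀ᵀ * Mt * P₀)⁻¹ * P₀ᵀ * Mt).mulVec w) ⬝ᵥ
          Mt.mulVec ((1 - P₀ * (P₀ᵀ * Mt * P₀)⁻¹ * P₀ᵀ * Mt).mulVec w)) /
        (w ⬝ᵥ A.mulVec w) ≤ 1 / lam ⟨nc, hnc⟩ := by
    intro w hw
    have hE : 1 - P₀ * (P₀ᵀ * Mt * P₀)⁻¹ * P₀ᵀ * Mt = 1 - P₀ * P₀ᵀ * Mt := by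
      rw [hS, inv_one, Matrix.mul_one]
    set c : Fin n → ℝ := (Vᵀ * Mt).mulVec w with hc
    have hwc : V.mulVec c = w := hrepr w
    have hc0 : c ≠ 0 := by
      intro h
      apply hw
      rw [← hwc, h, Matrix.mulVec_zero]
    rw [hE, ← hwc, hmask, hqM, hqA]
    have hD : 0 < ∑ i, lam i * (c i * c i) := by
      obtain ⟨i0, hi0⟩ := Function.ne_iff.mp hc0
      refine Finset.sum_pos' (fun i _ => mul_nonneg (hpos i).le (mul_self_nonneg _))
        ⟨i0, Finset.mem_univ _, ?_⟩
      exact mul_pos (hpos i0) (mul_self_pos.mpr hi0)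
    rw [div_le_div_iff₀ hD (hpos _), one_mul, Finset.sum_mul]
    apply Finset.sum_le_sum
    intro i _
    by_cases h : (i : ℕ) < nc
    · simp only [if_pos h, mul_zero, zero_mul]
      exact mul_nonneg (hpos i).le (mul_self_nonneg _)
    · simp only [if_neg h]
      have hln : lam ⟨nc, hnc⟩ ≤ lam i := by
        apply hmono
        rw [Fin.le_def]
        exact not_lt.mp h
      nlinarith [mul_self_nonneg (c i)]
  have hw0ne : v ⟨nc, hnc⟩ ≠ 0 := by
    intro h
    have h1 := horth ⟨nc, hnc⟩ ⟨nc, hnc⟩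
    rw [h] at h1
    simp at h1
  have hz : (P₀ᵀ * Mt).mulVec (v ⟨nc, hnc⟩) = 0 := by
    rw [← Matrix.mulVec_mulVec]
    funext j
    have hne : Fin.castLE hnc.le j ≠ (⟨nc, hnc⟩ : Fin n) := by
      intro hh
      have h3 := congrArg Fin.val hh
      simp at h3
      have := j.isLt
      omega
    have h2 := horth (Fin.castLE hnc.le j) ⟨nc, hnc⟩
    rw [if_neg hne] at h2
    rw [hP₀]
    simpa [Matrix.mulVec, dotProduct, Matrix.transpose_apply] using h2
  have hEw0 : (1 - P₀ * (P₀ᵀ * Mt * P₀)⁻¹ * P₀ᵀ * Mt).mulVec (v ⟨nc, hnc⟩)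
      = v ⟨nc, hnc⟩ := proj_fix Mt P₀ _ hz
  have hval : ((v ⟨nc,hnc⟩) ⬝ᵥ Mt.mulVec (v ⟨nc,hnc⟩))
      / ((v ⟨nc,hnc⟩) ⬝ᵥ A.mulVec (v ⟨nc,hnc⟩)) = 1 / lam ⟨nc, hnc⟩ := by
    rw [heig, dotProduct_smul, horth, if_pos rfl]
    simp
  haveI : Nonempty {w : Fin n → ℝ // w ≠ 0} := ⟨⟨v ⟨nc, hnc⟩, hw0ne⟩⟩
  have hbdd : BddAbove (Set.range fun p : {w : Fin n → ℝ // w ≠ 0} =>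
      (((1 - P₀ * (P₀ᵀ * Mt * P₀)⁻¹ * P₀ᵀ * Mt).mulVec p.1) ⬝ᵥ
          Mt.mulVec ((1 - P₀ * (P₀ᵀ * Mt * P₀)⁻¹ * P₀ᵀ * Mt).mulVec p.1)) /
        (p.1 ⬝ᵥ A.mulVec p.1)) := by
    refine ⟨1 / lam ⟨nc, hnc⟩, ?_⟩
    rintro x ⟨p, rfl⟩
    exact hub p.1 p.2
  have hK1 : Kconst A Mt P₀ = 1 / lam ⟨nc, hnc⟩ := by
    unfold Kconst
    apply le_antisymm
    · exact ciSup_le fun p => hub p.1 p.2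
    · refine le_ciSup_of_le hbdd ⟨v ⟨nc, hnc⟩, hw0ne⟩ ?_
      show 1 / lam ⟨nc, hnc⟩ ≤
        (((1 - P₀ * (P₀ᵀ * Mt * P₀)⁻¹ * P₀ᵀ * Mt).mulVec (v ⟨nc, hnc⟩)) ⬝ᵥ
            Mt.mulVec ((1 - P₀ * (P₀ᵀ * Mt * P₀)⁻¹ * P₀ᵀ * Mt).mulVec (v ⟨nc, hnc⟩))) /
          ((v ⟨nc, hnc⟩) ⬝ᵥ A.mulVec (v ⟨nc, hnc⟩))
      rw [hEw0, hval]
  refine ⟨hK1, ?_⟩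
  intro P hP
  rw [hK1]
  have hSsymm : (Pᵀ * Mt * P)ᵀ = Pᵀ * Mt * P := by
    rw [Matrix.transpose_mul, Matrix.transpose_mul, Matrix.transpose_transpose, hMtT,
      Matrix.mul_assoc]
  have hSpd : (Pᵀ * Mt * P).PosDef := by
    refine Matrix.PosDef.of_dotProduct_mulVec_pos ((Matrix.conjTranspose_eq_transpose_of_trivial _).trans hSsymm) (fun x hx => ?_)
    have hx' : P.mulVec x ≠ 0 := by
      intro h0
      exact hx (hP (by rw [h0, Matrix.mulVec_zero]))
    have h1 : 0 < (P.mulVec x) ⬝ᵥ Mt.mulVec (P.mulVec x) := by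
      simpa using hMt.dotProduct_mulVec_pos hx'
    rw [quad_form P Mt x] at h1
    simpa using h1
  have hdet : IsUnit (Pᵀ * Mt * P).det := isUnit_iff_ne_zero.mpr hSpd.det_pos.ne'
  have hSS : (Pᵀ * Mt * P) * (Pᵀ * Mt * P)⁻¹ = 1 := Matrix.mul_nonsing_inv _ hdet
  have hQE : (Pᵀ * Mt) * (1 - P * (Pᵀ * Mt * P)⁻¹ * Pᵀ * Mt) = 0 := by
    rw [Matrix.mul_sub, Matrix.mul_one]
    rw [show (Pᵀ * Mt) * (P * (Pᵀ * Mt * P)⁻¹ * Pᵀ * Mt)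
        = ((Pᵀ * Mt * P) * (Pᵀ * Mt * P)⁻¹) * (Pᵀ * Mt) by simp only [Matrix.mul_assoc]]
    rw [hSS, Matrix.one_mul, sub_self]
  -- uniform upper bound for the Rayleigh quotients of P
  have hubP : ∀ w : Fin n → ℝ, w ≠ 0 →
      (((1 - P * (Pᵀ * Mt * P)⁻¹ * Pᵀ * Mt).mulVec w) ⬝ᵥ
          Mt.mulVec ((1 - P * (Pᵀ * Mt * P)⁻¹ * Pᵀ * Mt).mulVec w)) /
        (w ⬝ᵥ A.mulVec w) ≤ 1 / lam ⟨0, hn0⟩ := by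
    intro w hw
    set E : Matrix (Fin n) (Fin n) ℝ := 1 - P * (Pᵀ * Mt * P)⁻¹ * Pᵀ * Mt with hEdef
    set u : Fin n → ℝ := (P * (Pᵀ * Mt * P)⁻¹).mulVec ((Pᵀ * Mt).mulVec w) with hu
    have hsplit : E.mulVec w + u = w := by
      rw [hEdef, Matrix.sub_mulVec, Matrix.one_mulVec, hu, Matrix.mulVec_mulVec]
      rw [show (P * (Pᵀ * Mt * P)⁻¹) * (Pᵀ * Mt) = P * (Pᵀ * Mt * P)⁻¹ * Pᵀ * Mt by
        simp only [Matrix.mul_assoc]]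
      exact sub_add_cancel _ _
    have hcross : u ⬝ᵥ Mt.mulVec (E.mulVec w) = 0 := by
      rw [hu, quad_form2, Matrix.mulVec_mulVec]
      rw [show ((P * (Pᵀ * Mt * P)⁻¹)ᵀ * Mt) * E
          = (Pᵀ * Mt * P)⁻¹ᵀ * ((Pᵀ * Mt) * E) by
        rw [Matrix.transpose_mul]; simp only [Matrix.mul_assoc]]
      rw [hQE, Matrix.mul_zero, Matrix.zero_mulVec, dotProduct_zero]
    have hcross2 : (E.mulVec w) ⬝ᵥ Mt.mulVec u = 0 := by
      rw [dot_symm Mt hMtT]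
      exact hcross
    have huMu : 0 ≤ u ⬝ᵥ Mt.mulVec u := by
      simpa using hMt.posSemidef.dotProduct_mulVec_nonneg u
    have hNle : (E.mulVec w) ⬝ᵥ Mt.mulVec (E.mulVec w) ≤ w ⬝ᵥ Mt.mulVec w := by
      have hexp : w ⬝ᵥ Mt.mulVec w
          = (E.mulVec w) ⬝ᵥ Mt.mulVec (E.mulVec w) + u ⬝ᵥ Mt.mulVec (E.mulVec w)
            + ((E.mulVec w) ⬝ᵥ Mt.mulVec u + u ⬝ᵥ Mt.mulVec u) := by
        conv_lhs => rw [← hsplit]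
        rw [Matrix.mulVec_add, add_dotProduct, dotProduct_add, dotProduct_add]
        ring
      rw [hexp, hcross, hcross2]
      linarith
    have hDge : lam ⟨0, hn0⟩ * (w ⬝ᵥ Mt.mulVec w) ≤ w ⬝ᵥ A.mulVec w := by
      obtain ⟨c, hc⟩ : ∃ c, V.mulVec c = w := ⟨_, hrepr w⟩
      rw [← hc, hqM, hqA, Finset.mul_sum]
      apply Finset.sum_le_sum
      intro i _
      have hli : lam ⟨0, hn0⟩ ≤ lam i := by
        apply hmono
        rw [Fin.le_def]
        exact Nat.zero_le _
      have h2 := mul_le_mul_of_nonneg_right hli (mul_self_nonneg (c i))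
      linarith
    have hMw : 0 < w ⬝ᵥ Mt.mulVec w := by simpa using hMt.dotProduct_mulVec_pos hw
    have hAw : 0 < w ⬝ᵥ A.mulVec w := by simpa using hA.dotProduct_mulVec_pos hw
    calc (E.mulVec w) ⬝ᵥ Mt.mulVec (E.mulVec w) / (w ⬝ᵥ A.mulVec w)
        ≤ (w ⬝ᵥ Mt.mulVec w) / (lam ⟨0, hn0⟩ * (w ⬝ᵥ Mt.mulVec w)) :=
          div_le_div₀ hMw.le hNle (mul_pos (hpos _) hMw) hDge
      _ = 1 / lam ⟨0, hn0⟩ := by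
          rw [mul_comm, ← div_div, div_self hMw.ne']
  have hbddP : BddAbove (Set.range fun p : {w : Fin n → ℝ // w ≠ 0} =>
      (((1 - P * (Pᵀ * Mt * P)⁻¹ * Pᵀ * Mt).mulVec p.1) ⬝ᵥ
          Mt.mulVec ((1 - P * (Pᵀ * Mt * P)⁻¹ * Pᵀ * Mt).mulVec p.1)) /
        (p.1 ⬝ᵥ A.mulVec p.1)) := by
    refine ⟨1 / lam ⟨0, hn0⟩, ?_⟩
    rintro x ⟨p, rfl⟩
    exact hubP p.1 p.2
  -- a nonzero vector in the span of the first nc+1 eigenvectors, Mt-orthogonal to range P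
  have hsub : nc + 1 ≤ n := hnc
  set W : Matrix (Fin n) (Fin (nc+1)) ℝ :=
    Matrix.of fun i (j : Fin (nc+1)) => v (Fin.castLE hsub j) i with hW
  have hWMW : Wᵀ * Mt * W = 1 := by
    rw [hW, gramM Mt v horth (Fin.castLE hsub) (Fin.castLE hsub)]
    ext j l
    simp [Matrix.one_apply, Fin.castLE_inj]
  have hWAW : Wᵀ * A * W
      = Matrix.diagonal (fun j : Fin (nc+1) => lam (Fin.castLE hsub j)) := by
    rw [hW, gramA A Mt lam v heig horth (Fin.castLE hsub) (Fin.castLE hsub)]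
    ext j l
    by_cases hjl : j = l <;> simp [hjl, Matrix.diagonal_apply, Fin.castLE_inj]
  have hninj : ¬ Function.Injective ((Pᵀ * Mt * W).mulVecLin) := by
    intro hinj
    have hfr := LinearMap.finrank_le_finrank_of_injective hinj
    simp at hfr
  obtain ⟨a, b, hab, hne⟩ := Function.not_injective_iff.mp hninj
  set c0 : Fin (nc+1) → ℝ := a - b with hc0def
  have hc0 : c0 ≠ 0 := sub_ne_zero.mpr hne
  have hBc : (Pᵀ * Mt * W).mulVec c0 = 0 := by
    simp only [Matrix.mulVecLin_apply] at hab
    rw [hc0def, Matrix.mulVec_sub, hab, sub_self]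
  set w : Fin n → ℝ := W.mulVec c0 with hwdef
  have hWMw : (Wᵀ * Mt).mulVec w = c0 := by
    rw [hwdef, Matrix.mulVec_mulVec, hWMW, Matrix.one_mulVec]
  have hwne : w ≠ 0 := by
    intro h
    rw [h, Matrix.mulVec_zero] at hWMw
    exact hc0 hWMw.symm
  have hPMw : (Pᵀ * Mt).mulVec w = 0 := by
    rw [hwdef, Matrix.mulVec_mulVec]
    exact hBc
  have hEw : (1 - P * (Pᵀ * Mt * P)⁻¹ * Pᵀ * Mt).mulVec w = w := proj_fix Mt P w hPMw
  have hwMw : w ⬝ᵥ Mt.mulVec w = ∑ j, c0 j * c0 j := by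
    rw [hwdef, quad_form, hWMW, Matrix.one_mulVec]
    simp [dotProduct]
  have hwAw : w ⬝ᵥ A.mulVec w = ∑ j, lam (Fin.castLE hsub j) * (c0 j * c0 j) := by
    rw [hwdef, quad_form, hWAW]
    simp only [dotProduct, Matrix.mulVec_diagonal]
    exact Finset.sum_congr rfl fun j _ => by ring
  have hDpos : 0 < w ⬝ᵥ A.mulVec w := by simpa using hA.dotProduct_mulVec_pos hwne
  have hratio : 1 / lam ⟨nc, hnc⟩ ≤ (w ⬝ᵥ Mt.mulVec w) / (w ⬝ᵥ A.mulVec w) := by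
    rw [div_le_div_iff₀ (hpos _) hDpos, one_mul, hwMw, hwAw, Finset.sum_mul]
    apply Finset.sum_le_sum
    intro j _
    have hlj : lam (Fin.castLE hsub j) ≤ lam ⟨nc, hnc⟩ := by
      apply hmono
      rw [Fin.le_def]
      simpa using Nat.lt_succ_iff.mp j.isLt
    nlinarith [mul_self_nonneg (c0 j)]
  calc (1:ℝ) / lam ⟨nc, hnc⟩ ≤ (w ⬝ᵥ Mt.mulVec w) / (w ⬝ᵥ A.mulVec w) := hratio
    _ ≤ Kconst A Mt P := by
        unfold Kconst
        refine le_ciSup_of_le hbddP ⟨w, hwne⟩ ?_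
        show (w ⬝ᵥ Mt.mulVec w) / (w ⬝ᵥ A.mulVec w) ≤
          (((1 - P * (Pᵀ * Mt * P)⁻¹ * Pᵀ * Mt).mulVec w) ⬝ᵥ
              Mt.mulVec ((1 - P * (Pᵀ * Mt * P)⁻¹ * Pᵀ * Mt).mulVec w)) /
            (w ⬝ᵥ A.mulVec w)
        rw [hEw]
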